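/- Let G be a minimal candidate with bipartition (A,B), and let X ⊆ A or X ⊆ B with |X| = 4. Then there do not exist five pairwise vertex-disjoint connected subgraphs Y_1,…,Y_5 of G\X such that every vertex of X has a neighbour in each Y_i. -/

import Mathlib

open SimpleGraph Function

/-- `G` has a `K_t` minor: there are `t` nonempty, pairwise disjoint "branch sets",
each inducing a connected subgraph, with an edge of `G` between any two of them.
(This is the "`t`-cluster" formulation, equivalent to `K_t` being obtainable from a
subgraph of `G` by contracting edges.) -/
def HasCliqueMinor {V : Type*} (G : SimpleGraph V) (t : ℕ) : Prop :=
  ∃ f : Fin t → Set V,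
    (∀ i, (f i).Nonempty) ∧
    (∀ i, (G.induce (f i)).Connected) ∧
    (Pairwise fun i j => Disjoint (f i) (f j)) ∧
    ∀ i j, i ≠ j → ∃ u ∈ f i, ∃ v ∈ f j, G.Adj u v

/-- `(A, B)` is a bipartition of `G`: the parts partition the vertex set and
every edge joins `A` to `B`. -/
def IsBipartitionWith {V : Type*} (G : SimpleGraph V) (A B : Set V) : Prop :=
  (∀ v, v ∈ A ∨ v ∈ B) ∧ (∀ v, ¬(v ∈ A ∧ v ∈ B)) ∧
    ∀ ⦃u v⦄, G.Adj u v → (u ∈ A ↔ v ∈ B)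

/-- A candidate: a graph with a bipartition `(A,B)`, `|A| ≥ |B| > 0`, every vertex
of `A` of degree at least six, and no `K_6` minor. -/
def IsCandidate {V : Type*} (G : SimpleGraph V) (A B : Set V) : Prop :=
  IsBipartitionWith G A B ∧ B.ncard ≤ A.ncard ∧ B.Nonempty ∧
    (∀ a ∈ A, 6 ≤ (G.neighborSet a).ncard) ∧ ¬ HasCliqueMinor G 6

/-- A minimal candidate: a candidate minimizing `|V(G)| + |E(G)|` among all
(finite) candidates. -/
def IsMinimalCandidate {V : Type*} [Fintype V] (G : SimpleGraph V) (A B : Set V) : Prop :=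
  IsCandidate G A B ∧
    ∀ (n : ℕ) (G' : SimpleGraph (Fin n)) (A' B' : Set (Fin n)),
      IsCandidate G' A' B' →
        Fintype.card V + G.edgeSet.ncard ≤ n + G'.edgeSet.ncard


namespace AuxNFA


noncomputable def embInduceIso {V W : Type*} {G : SimpleGraph V} {H : SimpleGraph W}
    (f : G ↪g H) (s : Set V) : G.induce s ≃g H.induce (f '' s) where
  toEquiv := Equiv.Set.image f s f.injective
  map_rel_iff' := by
    rintro ⟨a, ha⟩ ⟨b, hb⟩
    simp [Equiv.Set.image, Equiv.Set.imageOfInjOn, f.map_adj_iff]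

lemma hasCliqueMinor_mono {V W : Type*} {G : SimpleGraph V} {H : SimpleGraph W}
    (f : G ↪g H) {t : ℕ} (h : HasCliqueMinor G t) : HasCliqueMinor H t := by
  obtain ⟨Y, h1, h2, h3, h4⟩ := h
  refine ⟨fun i => f '' Y i, fun i => (h1 i).image f, fun i => ?_, fun i j hij => ?_, ?_⟩
  · exact (embInduceIso f (Y i)).connected_iff.mp (h2 i)
  · exact (Set.disjoint_image_iff f.injective).mpr (h3 hij)
  · intro i j hij
    obtain ⟨u, hu, v, hv, ha⟩ := h4 i j hij
    exact ⟨f u, ⟨u, hu, rfl⟩, f v, ⟨v, hv, rfl⟩, f.map_adj_iff.mpr ha⟩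

def induceEmb {V : Type*} (G : SimpleGraph V) (s : Set V) : G.induce s ↪g G :=
  ⟨⟨Subtype.val, Subtype.val_injective⟩, Iff.rfl⟩

/-- The key consequence of minimality: a strictly smaller induced subgraph whose
`A`-part keeps all its neighbours, with nonempty `B`-part, must fail the
cardinality condition. -/
lemma shrink {V : Type} [Fintype V] {G : SimpleGraph V} {A B : Set V}
    (hmin : IsMinimalCandidate G A B) {S : Set V} (hSne : S ≠ Set.univ)
    (hclosed : ∀ a ∈ A ∩ S, G.neighborSet a ⊆ S)
    (hBne : (B ∩ S).Nonempty) :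
    (A ∩ S).ncard < (B ∩ S).ncard := by
  classical
  by_contra hcon
  push_neg at hcon
  set n := Fintype.card S with hn
  set e : S ≃ Fin n := Fintype.equivFin S with he
  set ψ : Fin n → V := fun i => (e.symm i : V) with hψ
  have hψinj : Injective ψ := fun i j h => by
    apply e.symm.injective; exact Subtype.val_injective h
  set G' : SimpleGraph (Fin n) := (G.induce S).comap e.symm.toEmbedding with hG'
  have hadj' : ∀ i j, G'.Adj i j ↔ G.Adj (ψ i) (ψ j) := fun i j => Iff.rfl
  set A' : Set (Fin n) := {i | ψ i ∈ A} with hA'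
  set B' : Set (Fin n) := {i | ψ i ∈ B} with hB'
  have hψS : ∀ i, ψ i ∈ S := fun i => (e.symm i).2
  have himA : ψ '' A' = A ∩ S := by
    apply Set.eq_of_subset_of_subset
    · rintro _ ⟨i, hi, rfl⟩; exact ⟨hi, hψS i⟩
    · rintro a ⟨ha, haS⟩
      exact ⟨e ⟨a, haS⟩, by simp [hA', hψ, ha], by simp [hψ]⟩
  have himB : ψ '' B' = B ∩ S := by
    apply Set.eq_of_subset_of_subset
    · rintro _ ⟨i, hi, rfl⟩; exact ⟨hi, hψS i⟩
    · rintro a ⟨ha, haS⟩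
      exact ⟨e ⟨a, haS⟩, by simp [hB', hψ, ha], by simp [hψ]⟩
  have hcandG := hmin.1
  obtain ⟨⟨hbip1, hbip2, hbip3⟩, hBA, hBn, hdeg, hK6⟩ := hcandG
  have hcand' : IsCandidate G' A' B' := by
    refine ⟨⟨fun i => hbip1 (ψ i), fun i => hbip2 (ψ i), ?_⟩, ?_, ?_, ?_, ?_⟩
    · intro i j hij
      exact hbip3 ((hadj' i j).mp hij)
    · rw [← Set.ncard_image_of_injective A' hψinj, ← Set.ncard_image_of_injective B' hψinj,
        himA, himB]
      exact hcon
    · obtain ⟨b, hb, hbS⟩ := hBne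
      exact ⟨e ⟨b, hbS⟩, by simp [hB', hψ, hb]⟩
    · intro i hi
      have him : ψ '' (G'.neighborSet i) = G.neighborSet (ψ i) := by
        apply Set.eq_of_subset_of_subset
        · rintro _ ⟨j, hj, rfl⟩; exact hj
        · rintro w hw
          have hwS : w ∈ S := hclosed (ψ i) ⟨hi, hψS i⟩ hw
          refine ⟨e ⟨w, hwS⟩, ?_, by simp [hψ]⟩
          show G'.Adj i _
          rw [hadj']
          simpa [hψ] using hw
      calc 6 ≤ (G.neighborSet (ψ i)).ncard := hdeg (ψ i) hi
        _ = (ψ '' (G'.neighborSet i)).ncard := by rw [him]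
        _ = (G'.neighborSet i).ncard := Set.ncard_image_of_injective _ hψinj
    · intro hM
      exact hK6 (hasCliqueMinor_mono (induceEmb G S)
        (hasCliqueMinor_mono (Iso.comap e.symm (G.induce S)).toEmbedding hM))
  have hineq := hmin.2 n G' A' B' hcand'
  -- n < card V
  have hnlt : n < Fintype.card V := by
    have h1 : (n : ℕ) = S.ncard := by
      rw [hn, Set.ncard_eq_toFinset_card']; simp
    have h2 : S.ncard < (Set.univ : Set V).ncard :=
      Set.ncard_lt_ncard (Set.ssubset_univ_iff.mpr hSne) (Set.finite_univ)
    rw [h1]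
    simpa [Set.ncard_univ, Nat.card_eq_fintype_card] using h2
  -- edges of G' at most edges of G
  have hedge : G'.edgeSet.ncard ≤ G.edgeSet.ncard := by
    apply Set.ncard_le_ncard_of_injOn (Sym2.map ψ)
    · intro s hs
      induction s with
      | _ i j => exact (hadj' i j).mp hs
    · exact ((Sym2.map.injective hψinj).injOn)
  omega



variable {V : Type*} {G : SimpleGraph V}

/-- The graph `G` with the vertices of `X` (edge-)deleted. -/
def delv (G : SimpleGraph V) (X : Set V) : SimpleGraph V where
  Adj u v := G.Adj u v ∧ u ∉ X ∧ v ∉ X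
  symm := ⟨fun u v ⟨h1, h2, h3⟩ => ⟨h1.symm, h3, h2⟩⟩
  loopless := ⟨fun u h => G.loopless.irrefl u h.1⟩

lemma delv_walk_notin {X : Set V} {u w : V} (p : (delv G X).Walk u w) (hu : u ∉ X) :
    w ∉ X := by
  induction p with
  | nil => exact hu
  | cons h p ih => exact ih h.2.2

lemma delv_reach_notin {X : Set V} {u w : V} (h : (delv G X).Reachable u w) (hu : u ∉ X) :
    w ∉ X := by
  obtain ⟨p⟩ := h
  exact delv_walk_notin p hu

lemma delv_support_notin {X : Set V} {u w : V} (p : (delv G X).Walk u w) (hu : u ∉ X) :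
    ∀ z ∈ p.support, z ∉ X := by
  induction p with
  | nil => intro z hz; rw [SimpleGraph.Walk.support_nil] at hz; simp at hz; rwa [hz]
  | cons h p ih =>
    intro z hz
    rw [SimpleGraph.Walk.support_cons] at hz
    rcases List.mem_cons.mp hz with h1 | h2
    · rwa [h1]
    · exact ih h.2.2 z h2

lemma delv_reach_closed {X : Set V} {u a w : V} (hu : u ∉ X)
    (h : (delv G X).Reachable u a) (hadj : G.Adj a w) (hw : w ∉ X) :
    (delv G X).Reachable u w := by
  have ha : a ∉ X := delv_reach_notin h hu
  exact h.trans (SimpleGraph.Adj.reachable (⟨hadj, ha, hw⟩ : (delv G X).Adj a w))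

/-- A connected set disjoint from `X` is `delv`-reachable from any of its points. -/
lemma delv_reach_of_connected {X Y : Set V} (hconn : (G.induce Y).Connected)
    (hdisj : ∀ z ∈ Y, z ∉ X) {u w : V} (hu : u ∈ Y) (hw : w ∈ Y) :
    (delv G X).Reachable u w := by
  let hom : G.induce Y →g delv G X :=
    ⟨Subtype.val, fun {a b} hab => ⟨hab, hdisj _ a.2, hdisj _ b.2⟩⟩
  exact (hconn.preconnected ⟨u, hu⟩ ⟨w, hw⟩).map hom

/-- Prefix of a walk before first entering `T`. -/
lemma walk_prefix {X : Set V} {T : Set V} :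
    ∀ {u w : V} (p : (delv G X).Walk u w), u ∉ T → w ∈ T →
    ∃ (v b : V) (q : (delv G X).Walk u v), (delv G X).Adj v b ∧ b ∈ T ∧
      ∀ z ∈ q.support, z ∉ T := by
  intro u w p
  induction p with
  | nil => intro hu hw; exact absurd hw hu
  | @cons u c w h p ih =>
    intro hu hw
    by_cases hc : c ∈ T
    · refine ⟨u, c, SimpleGraph.Walk.nil, h, hc, ?_⟩
      intro z hz
      rw [SimpleGraph.Walk.support_nil] at hz
      simp at hz; rwa [hz]
    · obtain ⟨v, b, q, hadj, hbT, hq⟩ := ih hc hw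
      refine ⟨v, b, SimpleGraph.Walk.cons h q, hadj, hbT, ?_⟩
      intro z hz
      rw [SimpleGraph.Walk.support_cons] at hz
      rcases List.mem_cons.mp hz with h1 | h2
      · rwa [h1]
      · exact hq z h2

lemma induce_singleton_connected (G : SimpleGraph V) (xx : V) :
    (G.induce {xx}).Connected := by
  have hne : Nonempty ({xx} : Set V) := ⟨⟨xx, rfl⟩⟩
  constructor
  intro a b
  have : a = b := Subtype.ext (by rw [a.2, b.2])
  rw [this]


lemma cluster6 (Z : Fin 5 → Set V) (x : Fin 4 → V)
    (hxinj : Injective x)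
    (hZconn : ∀ i, (G.induce (Z i)).Connected)
    (hZdisj : Pairwise fun i j => Disjoint (Z i) (Z j))
    (hxZ : ∀ (k : Fin 4) (i : Fin 5), x k ∉ Z i)
    (hadj : ∀ (k : Fin 4) (i : Fin 5), ∃ y ∈ Z i, G.Adj (x k) y)
    (h01 : ∃ a ∈ Z 0, ∃ b ∈ Z 1, G.Adj a b) :
    HasCliqueMinor G 6 := by
  classical
  choose y hyZ hyadj using hadj
  set f : Fin 6 → Set V :=
    ![Z 0, Z 1, Z 2 ∪ {x 0}, Z 3 ∪ {x 1}, Z 4 ∪ {x 2}, {x 3}] with hf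
  have d : ∀ (a b : Fin 5), a ≠ b → Disjoint (Z a) (Z b) := fun a b h => hZdisj h
  have hne : ∀ (k l : Fin 4), k ≠ l → x k ≠ x l := fun k l h => hxinj.ne h
  have eZ : ∀ {S T : Set V} (k : Fin 4) (m : Fin 5), Z m ⊆ S → x k ∈ T →
      ∃ u ∈ S, ∃ v ∈ T, G.Adj u v :=
    fun k m hS hT => ⟨y k m, hS (hyZ k m), x k, hT, (hyadj k m).symm⟩
  have ex : ∀ {S T : Set V} (k : Fin 4) (m : Fin 5), x k ∈ S → Z m ⊆ T →
      ∃ u ∈ S, ∃ v ∈ T, G.Adj u v :=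
    fun k m hS hT => ⟨x k, hS, y k m, hT (hyZ k m), hyadj k m⟩
  have e10 : ∃ u ∈ Z 1, ∃ v ∈ Z 0, G.Adj u v := by
    obtain ⟨a, ha, b, hb, hab⟩ := h01; exact ⟨b, hb, a, ha, hab.symm⟩
  have dZx : ∀ (a : Fin 5) (k : Fin 4), Disjoint (Z a) ({x k} : Set V) :=
    fun a k => Set.disjoint_singleton_right.mpr (hxZ k a)
  have dxZ : ∀ (k : Fin 4) (a : Fin 5), Disjoint ({x k} : Set V) (Z a) :=
    fun k a => (dZx a k).symm
  have dxx : ∀ (k l : Fin 4), k ≠ l → Disjoint ({x k} : Set V) {x l} :=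
    fun k l h => Set.disjoint_singleton_left.mpr (fun hm => hne k l h hm)
  have dZU : ∀ (a b : Fin 5) (l : Fin 4), a ≠ b → Disjoint (Z a) (Z b ∪ {x l}) :=
    fun a b l h => Set.disjoint_union_right.mpr ⟨d a b h, dZx a l⟩
  have dUZ : ∀ (a : Fin 5) (k : Fin 4) (b : Fin 5), a ≠ b → Disjoint (Z a ∪ {x k}) (Z b) :=
    fun a k b h => (dZU b a k (Ne.symm h)).symm
  have dUU : ∀ (a : Fin 5) (k : Fin 4) (b : Fin 5) (l : Fin 4), a ≠ b → k ≠ l →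
      Disjoint (Z a ∪ {x k}) (Z b ∪ {x l}) :=
    fun a k b l h h' => Set.disjoint_union_left.mpr ⟨dZU a b l h, Set.disjoint_union_right.mpr ⟨dxZ k b, dxx k l h'⟩⟩
  have dUs : ∀ (a : Fin 5) (k l : Fin 4), k ≠ l → Disjoint (Z a ∪ {x k}) ({x l} : Set V) :=
    fun a k l h => Set.disjoint_union_left.mpr ⟨dZx a l, dxx k l h⟩
  have dsU : ∀ (l : Fin 4) (a : Fin 5) (k : Fin 4), k ≠ l → Disjoint ({x l} : Set V) (Z a ∪ {x k}) :=
    fun l a k h => (dUs a k l h).symm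
  have cu : ∀ (a : Fin 5) (k : Fin 4), (G.induce (Z a ∪ {x k})).Connected :=
    fun a k => connected_induce_union (hZconn a).preconnected (induce_singleton_connected G (x k)).preconnected
      (hyZ k a) rfl ((hyadj k a).symm)
  refine ⟨f, ?_, ?_, ?_, ?_⟩
  · intro i
    fin_cases i
    exacts [⟨y 0 0, hyZ 0 0⟩, ⟨y 0 1, hyZ 0 1⟩, ⟨x 0, Set.mem_union_right _ rfl⟩,
      ⟨x 1, Set.mem_union_right _ rfl⟩, ⟨x 2, Set.mem_union_right _ rfl⟩, ⟨x 3, rfl⟩]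
  · intro i
    fin_cases i
    exacts [hZconn 0, hZconn 1, cu 2 0, cu 3 1, cu 4 2, induce_singleton_connected G (x 3)]
  · intro i j hij
    fin_cases i <;> fin_cases j
    exacts [absurd rfl hij, d 0 1 (by decide), dZU 0 2 0 (by decide), dZU 0 3 1 (by decide),
      dZU 0 4 2 (by decide), dZx 0 3,
      d 1 0 (by decide), absurd rfl hij, dZU 1 2 0 (by decide), dZU 1 3 1 (by decide),
      dZU 1 4 2 (by decide), dZx 1 3,
      dUZ 2 0 0 (by decide), dUZ 2 0 1 (by decide), absurd rfl hij, dUU 2 0 3 1 (by decide) (by decide),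
      dUU 2 0 4 2 (by decide) (by decide), dUs 2 0 3 (by decide),
      dUZ 3 1 0 (by decide), dUZ 3 1 1 (by decide), dUU 3 1 2 0 (by decide) (by decide), absurd rfl hij,
      dUU 3 1 4 2 (by decide) (by decide), dUs 3 1 3 (by decide),
      dUZ 4 2 0 (by decide), dUZ 4 2 1 (by decide), dUU 4 2 2 0 (by decide) (by decide),
      dUU 4 2 3 1 (by decide) (by decide), absurd rfl hij, dUs 4 2 3 (by decide),
      dxZ 3 0, dxZ 3 1, dsU 3 2 0 (by decide), dsU 3 3 1 (by decide), dsU 3 4 2 (by decide),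
      absurd rfl hij]
  · intro i j hij
    fin_cases i <;> fin_cases j
    exacts [absurd rfl hij, h01, eZ 0 0 subset_rfl (Set.mem_union_right _ rfl),
      eZ 1 0 subset_rfl (Set.mem_union_right _ rfl), eZ 2 0 subset_rfl (Set.mem_union_right _ rfl),
      eZ 3 0 subset_rfl rfl,
      e10, absurd rfl hij, eZ 0 1 subset_rfl (Set.mem_union_right _ rfl),
      eZ 1 1 subset_rfl (Set.mem_union_right _ rfl), eZ 2 1 subset_rfl (Set.mem_union_right _ rfl),
      eZ 3 1 subset_rfl rfl,
      ex 0 0 (Set.mem_union_right _ rfl) subset_rfl, ex 0 1 (Set.mem_union_right _ rfl) subset_rfl,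
      absurd rfl hij, ex 0 3 (Set.mem_union_right _ rfl) Set.subset_union_left,
      ex 0 4 (Set.mem_union_right _ rfl) Set.subset_union_left, eZ 3 2 Set.subset_union_left rfl,
      ex 1 0 (Set.mem_union_right _ rfl) subset_rfl, ex 1 1 (Set.mem_union_right _ rfl) subset_rfl,
      ex 1 2 (Set.mem_union_right _ rfl) Set.subset_union_left, absurd rfl hij,
      ex 1 4 (Set.mem_union_right _ rfl) Set.subset_union_left, eZ 3 3 Set.subset_union_left rfl,
      ex 2 0 (Set.mem_union_right _ rfl) subset_rfl, ex 2 1 (Set.mem_union_right _ rfl) subset_rfl,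
      ex 2 2 (Set.mem_union_right _ rfl) Set.subset_union_left,
      ex 2 3 (Set.mem_union_right _ rfl) Set.subset_union_left, absurd rfl hij,
      eZ 3 4 Set.subset_union_left rfl,
      ex 3 0 rfl subset_rfl, ex 3 1 rfl subset_rfl, ex 3 2 rfl Set.subset_union_left,
      ex 3 3 rfl Set.subset_union_left, ex 3 4 rfl Set.subset_union_left, absurd rfl hij]


end AuxNFA

/-- In a minimal candidate, for `X ⊆ A` or `X ⊆ B` with `|X| = 4`, there are no five
pairwise disjoint connected subgraphs of `G \ X` such that every vertex of `X` has a
neighbour in each of them. -/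
theorem minimalCandidate_no_five_attachments {V : Type} [Fintype V] (G : SimpleGraph V)
    (A B : Set V) (hmin : IsMinimalCandidate G A B) (X : Set V)
    (hX : X ⊆ A ∨ X ⊆ B) (hcard : X.ncard = 4) :
    ¬ ∃ Y : Fin 5 → Set V,
        (∀ i, Disjoint (Y i) X) ∧
        (∀ i, (G.induce (Y i)).Connected) ∧
        (Pairwise fun i j => Disjoint (Y i) (Y j)) ∧
        ∀ x ∈ X, ∀ i, ∃ y ∈ Y i, G.Adj x y := by
  classical
  open AuxNFA in
  rintro ⟨Y, hYX, hYconn, hYdisj, hYadj⟩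
  obtain ⟨⟨hbip1, hbip2, hbip3⟩, hBA, hBn, hdeg, hK6⟩ := hmin.1
  haveI : Fintype X := Fintype.ofFinite _
  have hc4 : Fintype.card X = 4 := by
    rw [← Set.toFinset_card, ← Set.ncard_eq_toFinset_card']; exact hcard
  let e4 : Fin 4 ≃ X := (Fintype.equivFinOfCardEq hc4).symm
  set x : Fin 4 → V := fun k => (e4 k : V) with hxdef
  have hxinj : Injective x := fun k l h => e4.injective (Subtype.val_injective h)
  have hxX : ∀ k, x k ∈ X := fun k => (e4 k).2
  have hYXn : ∀ i, ∀ z ∈ Y i, z ∉ X := fun i z hz hzX =>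
    Set.disjoint_left.mp (hYX i) hz hzX
  choose y hyY hyadj using fun (k : Fin 4) (i : Fin 5) => hYadj (x k) (hxX k) i
  by_cases hreach : ∃ i j : Fin 5, i ≠ j ∧ ∃ u ∈ Y i, ∃ w ∈ Y j, (delv G X).Reachable u w
  · -- Case 1: a `delv`-path between two of the `Y`s yields a `K_6` minor
    obtain ⟨i, j, hij, u, hu, w, hw, hr⟩ := hreach
    set T : Set V := {z | ∃ k, k ≠ i ∧ z ∈ Y k} with hT
    have huT : u ∉ T := by
      rintro ⟨k, hk, hk2⟩
      exact Set.disjoint_left.mp (hYdisj hk) hk2 hu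
    have hwT : w ∈ T := ⟨j, Ne.symm hij, hw⟩
    obtain ⟨p⟩ := hr
    obtain ⟨v, b, q, hvb, hbT, hq⟩ := walk_prefix p huT hwT
    obtain ⟨ks, hks, hbY⟩ := hbT
    set P : Set V := {z | z ∈ q.support} with hP
    have hPX : ∀ z ∈ P, z ∉ X := fun z hz => delv_support_notin q (hYXn i u hu) z hz
    have huP : u ∈ P := q.start_mem_support
    have hvP : v ∈ P := q.end_mem_support
    let hom : delv G X →g G := ⟨id, fun h => h.1⟩
    have hPconn : (G.induce P).Connected := by
      have h2 := (q.map hom).connected_induce_support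
      have h3 : {z | z ∈ (q.map hom).support} = P := by
        rw [SimpleGraph.Walk.support_map]
        have hcoe : ⇑hom = id := rfl
        rw [hcoe, List.map_id]
      rwa [h3] at h2
    have hYP : (G.induce (Y i ∪ P)).Connected :=
      induce_union_connected (hYconn i).preconnected hPconn.preconnected ⟨u, hu, huP⟩
    let τ : Equiv.Perm (Fin 5) := Equiv.swap 0 i
    let σ : Equiv.Perm (Fin 5) := (Equiv.swap 1 (τ ks)).trans τ
    have hτ0 : τ 0 = i := Equiv.swap_apply_left 0 i
    have h1 : τ ks ≠ 0 := by
      intro h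
      apply hks
      have h5 : τ (τ ks) = τ 0 := by rw [h]
      rwa [Equiv.swap_apply_self, hτ0] at h5
    have hσ0 : σ 0 = i := by
      show τ ((Equiv.swap 1 (τ ks)) 0) = i
      rw [Equiv.swap_apply_of_ne_of_ne (by decide) (Ne.symm h1)]
      exact hτ0
    have hσ1 : σ 1 = ks := by
      show τ ((Equiv.swap 1 (τ ks)) 1) = ks
      rw [Equiv.swap_apply_left, Equiv.swap_apply_self]
    let Z : Fin 5 → Set V := fun m => if m = 0 then Y i ∪ P else Y (σ m)
    have hZ0 : Z 0 = Y i ∪ P := if_pos rfl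
    have hZm : ∀ m : Fin 5, m ≠ 0 → Z m = Y (σ m) := fun m hm => if_neg hm
    have hσne : ∀ m : Fin 5, m ≠ 0 → σ m ≠ i := by
      intro m hm hc
      exact hm (σ.injective (by rw [hc, hσ0]))
    apply hK6
    apply cluster6 Z x hxinj
    · intro m
      by_cases hm : m = 0
      · rw [hm, hZ0]; exact hYP
      · rw [hZm m hm]; exact hYconn (σ m)
    · intro m m' hmm'
      by_cases hm : m = 0
      · subst hm
        have hm' : m' ≠ 0 := Ne.symm hmm'
        rw [hZ0, hZm m' hm']
        rw [Set.disjoint_union_left]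
        constructor
        · exact hYdisj (Ne.symm (hσne m' hm'))
        · rw [Set.disjoint_left]
          intro z hz hz2
          exact hq z hz ⟨σ m', hσne m' hm', hz2⟩
      · by_cases hm' : m' = 0
        · subst hm'
          rw [hZ0, hZm m hm]
          rw [Set.disjoint_union_right]
          constructor
          · exact hYdisj (hσne m hm)
          · rw [Set.disjoint_right]
            intro z hz hz2
            exact hq z hz ⟨σ m, hσne m hm, hz2⟩
        · rw [hZm m hm, hZm m' hm']
          exact hYdisj (fun hc => hmm' (σ.injective hc))
    · intro k m
      by_cases hm : m = 0
      · subst hm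
        rw [hZ0]
        rintro (hc | hc)
        · exact hYXn i (x k) hc (hxX k)
        · exact hPX (x k) hc (hxX k)
      · rw [hZm m hm]
        intro hc
        exact hYXn (σ m) (x k) hc (hxX k)
    · intro k m
      by_cases hm : m = 0
      · subst hm
        rw [hZ0]
        exact ⟨y k i, Or.inl (hyY k i), hyadj k i⟩
      · rw [hZm m hm]
        exact ⟨y k (σ m), hyY k (σ m), hyadj k (σ m)⟩
    · have hZ1 : Z 1 = Y ks := by
        rw [hZm 1 (by decide), hσ1]
      rw [hZ0, hZ1]
      exact ⟨v, Or.inr hvP, b, hbY, hvb.1⟩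
  · -- Case 2: the `Y`s lie in distinct components; counting contradiction
    push_neg at hreach
    set K : Fin 5 → Set V := fun k => {z | (delv G X).Reachable (y 0 k) z} with hKdef
    have hyK : ∀ k, y 0 k ∈ K k := fun k => Reachable.refl _
    have hYK : ∀ k, Y k ⊆ K k := fun k z hz =>
      delv_reach_of_connected (hYconn k) (hYXn k) (hyY 0 k) hz
    have hKX : ∀ k, ∀ z ∈ K k, z ∉ X := fun k z hz =>
      delv_reach_notin hz (hYXn k _ (hyY 0 k))
    have hKdisj : ∀ k l : Fin 5, k ≠ l → Disjoint (K k) (K l) := by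
      intro k l hkl
      rw [Set.disjoint_left]
      intro z hzk hzl
      exact hreach k l hkl (y 0 k) (hyY 0 k) (y 0 l) (hyY 0 l) (hzk.trans hzl.symm)
    have hKcl : ∀ k, ∀ z ∈ K k, ∀ w, G.Adj z w → w ∉ X → w ∈ K k :=
      fun k z hz w hadj hw => delv_reach_closed (hYXn k _ (hyY 0 k)) hz hadj hw
    set R : Set V := {z | z ∉ X ∧ ∀ k, z ∉ K k} with hRdef
    have step : ∀ (C S : Set V), C.ncard = (C ∩ S).ncard + (C \ S).ncard := by
      intro C S
      have hd : Disjoint (C ∩ S) (C \ S) :=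
        Set.disjoint_sdiff_right.mono_left Set.inter_subset_right
      rw [← Set.ncard_union_eq hd (Set.toFinite _) (Set.toFinite _), Set.inter_union_diff]
    have hsplit : ∀ C : Set V, C.ncard = (C ∩ X).ncard + (C ∩ K 0).ncard + (C ∩ K 1).ncard
        + (C ∩ K 2).ncard + (C ∩ K 3).ncard + (C ∩ K 4).ncard + (C ∩ R).ncard := by
      intro C
      have e0 := step C X
      have e1 := step (C \ X) (K 0)
      have e2 := step (((C) \ X) \ K 0) (K 1)
      have e3 := step ((((C) \ X) \ K 0) \ K 1) (K 2)
      have e4' := step (((((C) \ X) \ K 0) \ K 1) \ K 2) (K 3)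
      have e5 := step ((((((C) \ X) \ K 0) \ K 1) \ K 2) \ K 3) (K 4)
      have i1 : (C \ X) ∩ K 0 = C ∩ K 0 := by
        ext z; constructor
        · rintro ⟨⟨h1, _⟩, h2⟩; exact ⟨h1, h2⟩
        · rintro ⟨h1, h2⟩; exact ⟨⟨h1, hKX 0 z h2⟩, h2⟩
      have i2 : (((C) \ X) \ K 0) ∩ K 1 = C ∩ K 1 := by
        ext z; constructor
        · rintro ⟨⟨⟨h1, _⟩, _⟩, h2⟩; exact ⟨h1, h2⟩
        · rintro ⟨h1, h2⟩
          exact ⟨⟨⟨h1, hKX 1 z h2⟩, fun hc => Set.disjoint_left.mp (hKdisj 0 1 (by decide)) hc h2⟩, h2⟩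
      have i3 : ((((C) \ X) \ K 0) \ K 1) ∩ K 2 = C ∩ K 2 := by
        ext z; constructor
        · rintro ⟨⟨⟨⟨h1, _⟩, _⟩, _⟩, h2⟩; exact ⟨h1, h2⟩
        · rintro ⟨h1, h2⟩
          exact ⟨⟨⟨⟨h1, hKX 2 z h2⟩, fun hc => Set.disjoint_left.mp (hKdisj 0 2 (by decide)) hc h2⟩,
            fun hc => Set.disjoint_left.mp (hKdisj 1 2 (by decide)) hc h2⟩, h2⟩
      have i4 : (((((C) \ X) \ K 0) \ K 1) \ K 2) ∩ K 3 = C ∩ K 3 := by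
        ext z; constructor
        · rintro ⟨⟨⟨⟨⟨h1, _⟩, _⟩, _⟩, _⟩, h2⟩; exact ⟨h1, h2⟩
        · rintro ⟨h1, h2⟩
          exact ⟨⟨⟨⟨⟨h1, hKX 3 z h2⟩, fun hc => Set.disjoint_left.mp (hKdisj 0 3 (by decide)) hc h2⟩,
            fun hc => Set.disjoint_left.mp (hKdisj 1 3 (by decide)) hc h2⟩,
            fun hc => Set.disjoint_left.mp (hKdisj 2 3 (by decide)) hc h2⟩, h2⟩
      have i5 : ((((((C) \ X) \ K 0) \ K 1) \ K 2) \ K 3) ∩ K 4 = C ∩ K 4 := by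
        ext z; constructor
        · rintro ⟨⟨⟨⟨⟨⟨h1, _⟩, _⟩, _⟩, _⟩, _⟩, h2⟩; exact ⟨h1, h2⟩
        · rintro ⟨h1, h2⟩
          exact ⟨⟨⟨⟨⟨⟨h1, hKX 4 z h2⟩, fun hc => Set.disjoint_left.mp (hKdisj 0 4 (by decide)) hc h2⟩,
            fun hc => Set.disjoint_left.mp (hKdisj 1 4 (by decide)) hc h2⟩,
            fun hc => Set.disjoint_left.mp (hKdisj 2 4 (by decide)) hc h2⟩,
            fun hc => Set.disjoint_left.mp (hKdisj 3 4 (by decide)) hc h2⟩, h2⟩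
      have i6 : ((((((C) \ X) \ K 0) \ K 1) \ K 2) \ K 3) \ K 4 = C ∩ R := by
        ext z; constructor
        · rintro ⟨⟨⟨⟨⟨⟨h1, hx'⟩, h0⟩, h1'⟩, h2⟩, h3⟩, h4⟩
          refine ⟨h1, hx', ?_⟩
          intro k
          fin_cases k <;> assumption
        · rintro ⟨h1, hx', hk⟩
          exact ⟨⟨⟨⟨⟨⟨h1, hx'⟩, hk 0⟩, hk 1⟩, hk 2⟩, hk 3⟩, hk 4⟩
      rw [i1] at e1; rw [i2] at e2; rw [i3] at e3; rw [i4] at e4'; rw [i5, i6] at e5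
      omega
    rcases hX with hXA | hXB
    · -- X ⊆ A
      have hAX : (A ∩ X) = X := Set.inter_eq_right.mpr hXA
      have hBX : (B ∩ X) = (∅ : Set V) := by
        ext z
        simp only [Set.mem_inter_iff, Set.mem_empty_iff_false, iff_false, not_and]
        intro h1 h2
        exact hbip2 z ⟨hXA h2, h1⟩
      have hyB : ∀ k, y 0 k ∈ B := fun k => (hbip3 (hyadj 0 k)).mp (hXA (hxX 0))
      have hsh : ∀ k, (A ∩ K k).ncard < (B ∩ K k).ncard := by
        intro k
        apply shrink hmin
        · intro hc
          exact hKX k (x 0) (hc ▸ Set.mem_univ (x 0)) (hxX 0)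
        · rintro a ⟨haA, haK⟩ w hw
          have hwB : w ∈ B := (hbip3 hw).mp haA
          have hwX : w ∉ X := fun hc => hbip2 w ⟨hXA hc, hwB⟩
          exact hKcl k a haK w hw hwX
        · exact ⟨y 0 k, hyB k, hYK k (hyY 0 k)⟩
      have hA := hsplit A
      have hB := hsplit B
      rw [hAX, hcard] at hA
      rw [hBX, Set.ncard_empty] at hB
      have h0 := hsh 0
      have h1 := hsh 1
      have h2 := hsh 2
      have h3 := hsh 3
      have h4 := hsh 4
      obtain ⟨a0, ha0⟩ := Set.nonempty_of_ncard_ne_zero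
        (show (A ∩ R).ncard ≠ 0 by omega)
      have hRcl : ∀ a ∈ A ∩ R, G.neighborSet a ⊆ R := by
        rintro a ⟨haA, haX', haK⟩ w hw
        have hwB : w ∈ B := (hbip3 hw).mp haA
        have hwX : w ∉ X := fun hc => hbip2 w ⟨hXA hc, hwB⟩
        refine ⟨hwX, ?_⟩
        intro k hc
        exact haK k (hKcl k w hc a hw.symm haX')
      obtain ⟨w0, hw0⟩ := Set.nonempty_of_ncard_ne_zero
        (show (G.neighborSet a0).ncard ≠ 0 by have := hdeg a0 ha0.1; omega)
      have hshR : (A ∩ R).ncard < (B ∩ R).ncard := by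
        apply shrink hmin
        · intro hc
          exact (hc ▸ Set.mem_univ (x 0) : x 0 ∈ R).1 (hxX 0)
        · exact hRcl
        · exact ⟨w0, (hbip3 hw0).mp ha0.1, hRcl a0 ha0 hw0⟩
      omega
    · -- X ⊆ B
      have hAnX : ∀ a ∈ A, a ∉ X := fun a ha hc => hbip2 a ⟨ha, hXB hc⟩
      have hAX : (A ∩ X) = (∅ : Set V) := by
        ext z
        simp only [Set.mem_inter_iff, Set.mem_empty_iff_false, iff_false, not_and]
        intro h1 h2
        exact hAnX z h1 h2
      have hBX : (B ∩ X) = X := Set.inter_eq_right.mpr hXB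
      have hsh : ∀ k : Fin 5, (A ∩ (K k)ᶜ).ncard < (B ∩ (K k)ᶜ).ncard := by
        intro k
        apply shrink hmin
        · intro hc
          exact (hc ▸ Set.mem_univ (y 0 k) : y 0 k ∈ (K k)ᶜ) (hyK k)
        · rintro a ⟨haA, haK⟩ w hw
          by_cases hwX : w ∈ X
          · exact fun hc => hKX k w hc hwX
          · intro hc
            exact haK (hKcl k w hc a hw.symm (hAnX a haA))
        · exact ⟨x 0, hXB (hxX 0), fun hc => hKX k (x 0) hc (hxX 0)⟩
      have hstepA : ∀ k : Fin 5, A.ncard = (A ∩ K k).ncard + (A ∩ (K k)ᶜ).ncard := by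
        intro k
        rw [step A (K k), Set.diff_eq]
      have hstepB : ∀ k : Fin 5, B.ncard = (B ∩ K k).ncard + (B ∩ (K k)ᶜ).ncard := by
        intro k
        rw [step B (K k), Set.diff_eq]
      set Sstar : Set V := X ∪ K 0 ∪ K 1 ∪ K 2 ∪ K 3 with hSdef
      have idR : ∀ C : Set V, (C \ K 4) ∩ R = C ∩ R := by
        intro C; ext z; constructor
        · rintro ⟨⟨h1, _⟩, h2⟩; exact ⟨h1, h2⟩
        · rintro ⟨h1, h2⟩; exact ⟨⟨h1, h2.2 4⟩, h2⟩
      have idS : ∀ C : Set V, (C \ K 4) \ R = C ∩ Sstar := by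
        intro C; ext z
        constructor
        · rintro ⟨⟨h1, h4⟩, hzR⟩
          refine ⟨h1, ?_⟩
          by_cases hzX : z ∈ X
          · exact Or.inl (Or.inl (Or.inl (Or.inl hzX)))
          · have hex : ∃ k, z ∈ K k := by
              by_contra hno
              push_neg at hno
              exact hzR ⟨hzX, hno⟩
            obtain ⟨k, hk⟩ := hex
            fin_cases k
            · exact Or.inl (Or.inl (Or.inl (Or.inr hk)))
            · exact Or.inl (Or.inl (Or.inr hk))
            · exact Or.inl (Or.inr hk)
            · exact Or.inr hk
            · exact absurd hk h4
        · rintro ⟨h1, hz⟩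
          have hzK4 : z ∉ K 4 := by
            rcases hz with ((((h | h) | h) | h) | h)
            · exact fun hc => hKX 4 z hc h
            · exact fun hc => Set.disjoint_left.mp (hKdisj 0 4 (by decide)) h hc
            · exact fun hc => Set.disjoint_left.mp (hKdisj 1 4 (by decide)) h hc
            · exact fun hc => Set.disjoint_left.mp (hKdisj 2 4 (by decide)) h hc
            · exact fun hc => Set.disjoint_left.mp (hKdisj 3 4 (by decide)) h hc
          have hzR : z ∉ R := by
            rintro ⟨hzX, hzK⟩
            rcases hz with ((((h | h) | h) | h) | h)
            · exact hzX h
            · exact hzK 0 h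
            · exact hzK 1 h
            · exact hzK 2 h
            · exact hzK 3 h
          exact ⟨⟨h1, hzK4⟩, hzR⟩
      have hshS : (A ∩ Sstar).ncard < (B ∩ Sstar).ncard := by
        apply shrink hmin
        · intro hc
          rcases (hc ▸ Set.mem_univ (y 0 4) : y 0 4 ∈ Sstar) with ((((h | h) | h) | h) | h)
          · exact hYXn 4 _ (hyY 0 4) h
          · exact Set.disjoint_left.mp (hKdisj 0 4 (by decide)) h (hYK 4 (hyY 0 4))
          · exact Set.disjoint_left.mp (hKdisj 1 4 (by decide)) h (hYK 4 (hyY 0 4))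
          · exact Set.disjoint_left.mp (hKdisj 2 4 (by decide)) h (hYK 4 (hyY 0 4))
          · exact Set.disjoint_left.mp (hKdisj 3 4 (by decide)) h (hYK 4 (hyY 0 4))
        · rintro a ⟨haA, haS⟩ w hw
          by_cases hwX : w ∈ X
          · exact Or.inl (Or.inl (Or.inl (Or.inl hwX)))
          · rcases haS with ((((h | h) | h) | h) | h)
            · exact absurd h (hAnX a haA)
            · exact Or.inl (Or.inl (Or.inl (Or.inr (hKcl 0 a h w hw hwX))))
            · exact Or.inl (Or.inl (Or.inr (hKcl 1 a h w hw hwX)))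
            · exact Or.inl (Or.inr (hKcl 2 a h w hw hwX))
            · exact Or.inr (hKcl 3 a h w hw hwX)
        · exact ⟨x 0, hXB (hxX 0), Or.inl (Or.inl (Or.inl (Or.inl (hxX 0))))⟩
      have hA := hsplit A
      have hB := hsplit B
      rw [hAX, Set.ncard_empty] at hA
      rw [hBX, hcard] at hB
      have hs0 := hsh 0
      have hs1 := hsh 1
      have hs2 := hsh 2
      have hs3 := hsh 3
      have ha0 := hstepA 0
      have ha1 := hstepA 1
      have ha2 := hstepA 2
      have ha3 := hstepA 3
      have hb0 := hstepB 0
      have hb1 := hstepB 1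
      have hb2 := hstepB 2
      have hb3 := hstepB 3
      have hA4 := step A (K 4)
      have hA4b := step (A \ K 4) R
      rw [idR A, idS A] at hA4b
      have hB4 := step B (K 4)
      have hB4b := step (B \ K 4) R
      rw [idR B, idS B] at hB4b
      omega
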